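/- Let R be a Noetherian F-finite commutative ring of characteristic p, let (M,C) be an F-pure q-Cartier module over R and let f ∈ R. Set N = Σ_{m≥0} C^m(fM). Then: (1) fM ⊆ N, so in particular f^k M ⊆ N for some k ≥ 1; (2) for every integer n ≥ 1, N = Σ_{m≥0} C^m(f^n M) = Σ_{m≥1} C^m(f^n M); (3) if N' ⊆ M is a finitely generated R-submodule with C(N') ⊆ N' and f^k M ⊆ N' for some integer k ≥ 1, then N ⊆ N'. In particular, N is the smallest finitely generated C-stable submodule of M that agrees with M after inverting f. -/

import Mathlib

open Pointwise Function

/-- The submodule `M_{f!} = Σ_{m ≥ 0} C^m (f M)` of an F-pure `q`-Cartier module `(M, C)`. -/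
def Mfbang {R M : Type*} [CommRing R] [AddCommGroup M] [Module R M]
    (C : M → M) (f : R) : Submodule R M :=
  ⨆ m : ℕ, Submodule.span R (C^[m] '' (f • (Set.univ : Set M)))

theorem stmt13 {R M : Type*} [CommRing R] [AddCommGroup M] [Module R M]
    (p : ℕ) [Fact p.Prime] [CharP R p] [IsNoetherianRing R]
    (hFF : (frobenius R p).Finite)
    (e q : ℕ) (he : 1 ≤ e) (hq : q = p ^ e)
    (C : M → M) (hCadd : ∀ x y : M, C (x + y) = C x + C y)
    (hCsl : ∀ (a : R) (x : M), C (a ^ q • x) = a • C x)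
    [Module.Finite R M] (hFpure : Function.Surjective C) (f : R) :
    -- (1) `f M ⊆ M_{f!}`, and in particular `f^k M ⊆ M_{f!}` for some `k ≥ 1`
    ((∀ x : M, f • x ∈ Mfbang C f) ∧
      ∃ k : ℕ, 1 ≤ k ∧ ∀ x : M, f ^ k • x ∈ Mfbang C f) ∧
    -- (2) for every `n ≥ 1`, `M_{f!} = Σ_{m ≥ 0} C^m(f^n M) = Σ_{m ≥ 1} C^m(f^n M)`
    (∀ n : ℕ, 1 ≤ n →
      Mfbang C f =
        (⨆ m : ℕ, Submodule.span R (C^[m] '' ((f ^ n) • (Set.univ : Set M)))) ∧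
      Mfbang C f =
        (⨆ m : ℕ, Submodule.span R (C^[m + 1] '' ((f ^ n) • (Set.univ : Set M))))) ∧
    -- (3) minimality: any finitely generated `C`-stable submodule `N'` containing
    -- `f^k M` for some `k ≥ 1` contains `M_{f!}`
    (∀ N' : Submodule R M, N'.FG → (∀ x ∈ N', C x ∈ N') →
      ∀ k : ℕ, 1 ≤ k → (∀ x : M, f ^ k • x ∈ N') → Mfbang C f ≤ N') := by
  have hp : p.Prime := Fact.out
  have hq2 : 2 ≤ q := by
    subst hq
    exact Nat.one_lt_pow (by omega) hp.one_lt
  -- semilinearity of iterates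
  have hiter : ∀ (m : ℕ) (a : R) (x : M), C^[m] (a ^ q ^ m • x) = a • C^[m] x := by
    intro m
    induction m with
    | zero => intro a x; simp
    | succ m ih =>
      intro a x
      rw [Function.iterate_succ_apply, Function.iterate_succ_apply]
      have h1 : a ^ q ^ (m + 1) = (a ^ q ^ m) ^ q := by
        rw [← pow_mul, pow_succ]
      rw [h1, hCsl, ih]
  have hnq : ∀ n : ℕ, n ≤ q ^ n := fun n =>
    le_trans (Nat.lt_two_pow_self (n := n)).le (Nat.pow_le_pow_left hq2 n)
  -- (1) : first part
  have h1 : ∀ x : M, f • x ∈ Mfbang C f := by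
    intro x
    refine Submodule.mem_iSup_of_mem 0 (Submodule.subset_span ?_)
    exact ⟨f • x, Set.smul_mem_smul_set (Set.mem_univ x), by simp⟩
  -- key inclusion: span (C^[m] (f M)) ≤ Σ_{m'} C^[m'+1] (f^n M)
  have key : ∀ (n : ℕ), 1 ≤ n → ∀ (m : ℕ),
      Submodule.span R (C^[m] '' (f • (Set.univ : Set M))) ≤
        ⨆ m' : ℕ, Submodule.span R (C^[m' + 1] '' ((f ^ n) • (Set.univ : Set M))) := by
    intro n hn m
    rw [Submodule.span_le]
    rintro y ⟨y', hy', rfl⟩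
    obtain ⟨x, -, rfl⟩ := hy'
    obtain ⟨z, hz⟩ := (hFpure.iterate n) x
    have hx : f • x = C^[n] ((f ^ q ^ n) • z) := by
      rw [hiter n f z, hz]
    have hpow : (f : R) ^ q ^ n = f ^ n * f ^ (q ^ n - n) := by
      rw [← pow_add]
      congr 1
      have := hnq n
      omega
    have hmem : (f ^ q ^ n) • z ∈ (f ^ n) • (Set.univ : Set M) := by
      rw [hpow, mul_smul]
      exact Set.smul_mem_smul_set (Set.mem_univ _)
    refine Submodule.mem_iSup_of_mem (m + (n - 1)) (Submodule.subset_span ?_)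
    refine ⟨(f ^ q ^ n) • z, hmem, ?_⟩
    have hmn : m + (n - 1) + 1 = m + n := by omega
    rw [hmn, Function.iterate_add_apply, ← hx]
  -- T_n ≤ S_n
  have hTS : ∀ n : ℕ,
      (⨆ m : ℕ, Submodule.span R (C^[m + 1] '' ((f ^ n) • (Set.univ : Set M)))) ≤
        ⨆ m : ℕ, Submodule.span R (C^[m] '' ((f ^ n) • (Set.univ : Set M))) := by
    intro n
    exact iSup_le fun m => le_iSup
      (fun m => Submodule.span R (C^[m] '' ((f ^ n) • (Set.univ : Set M)))) (m + 1)
  -- S_n ≤ Mfbang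
  have hSM : ∀ n : ℕ, 1 ≤ n →
      (⨆ m : ℕ, Submodule.span R (C^[m] '' ((f ^ n) • (Set.univ : Set M)))) ≤
        Mfbang C f := by
    intro n hn
    refine iSup_le fun m => ?_
    refine le_trans (Submodule.span_mono ?_) (le_iSup
      (fun m => Submodule.span R (C^[m] '' (f • (Set.univ : Set M)))) m)
    refine Set.image_mono ?_
    rintro y ⟨x, -, rfl⟩
    show (f : R) ^ n • x ∈ f • (Set.univ : Set M)
    have : (f : R) ^ n = f * f ^ (n - 1) := by
      conv_lhs => rw [show n = 1 + (n - 1) by omega]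
      rw [pow_add, pow_one]
    rw [this, mul_smul]
    exact Set.smul_mem_smul_set (Set.mem_univ _)
  -- Mfbang ≤ T_n
  have hMT : ∀ n : ℕ, 1 ≤ n → Mfbang C f ≤
      ⨆ m : ℕ, Submodule.span R (C^[m + 1] '' ((f ^ n) • (Set.univ : Set M))) := by
    intro n hn
    exact iSup_le fun m => key n hn m
  refine ⟨⟨h1, 1, le_refl 1, fun x => by rw [pow_one]; exact h1 x⟩, ?_, ?_⟩
  · intro n hn
    constructor
    · exact le_antisymm (le_trans (hMT n hn) (hTS n)) (hSM n hn)
    · exact le_antisymm (hMT n hn) (le_trans (hTS n) (hSM n hn))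
  · intro N' hFG hstab k hk hfk
    have hiterstab : ∀ (m : ℕ) (x : M), x ∈ N' → C^[m] x ∈ N' := by
      intro m
      induction m with
      | zero => intro x hx; simpa using hx
      | succ m ih =>
        intro x hx
        rw [Function.iterate_succ_apply]
        exact ih _ (hstab x hx)
    refine le_trans (le_trans (hMT k hk) (hTS k)) ?_
    refine iSup_le fun m => ?_
    rw [Submodule.span_le]
    rintro y ⟨y', hy', rfl⟩
    obtain ⟨x, -, rfl⟩ := hy'
    exact hiterstab m _ (hfk x)
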